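/- As t → ∞, d2(t) − d1(t) converges to ((v2 − v1)/α)² · (α21 − α12)/α. -/

import Mathlib

open Real Filter Set

/-- As `t → ∞`, `d2 t - d1 t` converges to
`((v2 - v1)/(α12 + α21))^2 * (α21 - α12)/(α12 + α21)`. -/
theorem stmt_5 (v1 v2 α12 α21 : ℝ) (h12 : 0 < α12) (h21 : 0 < α21)
    (a1 a2 d1 d2 : ℝ → ℝ)
    (h1 : ∀ t : ℝ, 0 ≤ t → HasDerivAt a1 (v1 + α12 * (a2 t - a1 t)) t)
    (h2 : ∀ t : ℝ, 0 ≤ t → HasDerivAt a2 (v2 + α21 * (a1 t - a2 t)) t)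
    (h3 : ∀ t : ℝ, 0 ≤ t →
      HasDerivAt d1 (α12 * (d2 t - d1 t) + α12 * (a2 t - a1 t) ^ 2) t)
    (h4 : ∀ t : ℝ, 0 ≤ t →
      HasDerivAt d2 (α21 * (d1 t - d2 t) + α21 * (a1 t - a2 t) ^ 2) t) :
    Filter.Tendsto (fun t => d2 t - d1 t) Filter.atTop
      (nhds (((v2 - v1) / (α12 + α21)) ^ 2 * ((α21 - α12) / (α12 + α21)))) := by
  set α : ℝ := α12 + α21 with hαdef
  have hαpos : 0 < α := by positivity
  set w : ℝ := v2 - v1 with hwdef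
  set c : ℝ := w / α with hcdef
  set β : ℝ := α21 - α12 with hβdef
  set K : ℝ := a2 0 - a1 0 - c with hKdef
  clear_value K
  clear_value c
  clear_value β
  clear_value w
  clear_value α
  have hαne : α ≠ 0 := ne_of_gt hαpos
  have hc : α * c = w := by rw [hcdef]; field_simp
  have hp : α * (β * c ^ 2 / α) = β * c ^ 2 := by field_simp
  have hq : α * (β * K ^ 2 / α) = β * K ^ 2 := by field_simp
  -- exponential derivative helpers
  have he : ∀ x : ℝ, HasDerivAt (fun y => Real.exp (α * y)) (Real.exp (α * x) * α) x := by
    intro x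
    simpa [Function.comp_def] using (Real.hasDerivAt_exp (α * x)).comp x ((hasDerivAt_id x).const_mul α)
  have he' : ∀ x : ℝ, HasDerivAt (fun y => Real.exp (-(α * y))) (Real.exp (-(α * x)) * (-α)) x := by
    intro x
    simpa [Function.comp_def] using (Real.hasDerivAt_exp (-(α * x))).comp x (((hasDerivAt_id x).const_mul α).neg)
  have hEE : ∀ x : ℝ, Real.exp (α * x) * Real.exp (-(α * x)) = 1 := by
    intro x; rw [← Real.exp_add]; simp
  -- Step 1: solve for a2 - a1
  have hbval : ∀ t : ℝ, 0 ≤ t → a2 t - a1 t = c + K * Real.exp (-(α * t)) := by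
    intro t ht
    have key : ∀ x ∈ Set.Icc (0:ℝ) t,
        Real.exp (α * x) * (a2 x - a1 x - c) = Real.exp (α * 0) * (a2 0 - a1 0 - c) := by
      apply constant_of_has_deriv_right_zero
      · intro x hx
        have hb' : HasDerivAt (fun y => a2 y - a1 y - c) (w - α * (a2 x - a1 x)) x := by
          have := ((h2 x hx.1).sub (h1 x hx.1)).sub_const c
          convert this using 1 <;> try rfl
          linear_combination hwdef + (-(a2 x - a1 x)) * hαdef
        exact (((he x).mul hb').continuousAt).continuousWithinAt
      · intro x hx
        have hb' : HasDerivAt (fun y => a2 y - a1 y - c) (w - α * (a2 x - a1 x)) x := by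
          have := ((h2 x hx.1).sub (h1 x hx.1)).sub_const c
          convert this using 1 <;> try rfl
          linear_combination hwdef + (-(a2 x - a1 x)) * hαdef
        have hd : HasDerivAt (fun y => Real.exp (α * y) * (a2 y - a1 y - c)) 0 x := by
          have := (he x).mul hb'
          convert this using 1 <;> try rfl
          linear_combination Real.exp (α * x) * hc
        exact hd.hasDerivWithinAt
    have h1t := key t ⟨ht, le_refl t⟩
    simp only [mul_zero, Real.exp_zero, one_mul] at h1t
    linear_combination Real.exp (-(α * t)) * h1t + (c - (a2 t - a1 t)) * hEE t
      - Real.exp (-(α * t)) * hKdef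
  -- Step 2: solve for d2 - d1
  set C0 : ℝ := d2 0 - d1 0 - β * c ^ 2 / α + β * K ^ 2 / α with hC0def
  clear_value C0
  have hFval : ∀ t : ℝ, 0 ≤ t →
      d2 t - d1 t = β * c ^ 2 / α + 2 * β * c * K * (t * Real.exp (-(α * t)))
        - β * K ^ 2 / α * (Real.exp (-(α * t))) ^ 2 + C0 * Real.exp (-(α * t)) := by
    intro t ht
    have key : ∀ x ∈ Set.Icc (0:ℝ) t,
        Real.exp (α * x) * (d2 x - d1 x)
          - (β * c ^ 2 / α * Real.exp (α * x) + 2 * β * c * K * x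
              - β * K ^ 2 / α * Real.exp (-(α * x)))
        = Real.exp (α * 0) * (d2 0 - d1 0)
          - (β * c ^ 2 / α * Real.exp (α * 0) + 2 * β * c * K * 0
              - β * K ^ 2 / α * Real.exp (-(α * 0))) := by
      apply constant_of_has_deriv_right_zero
      · intro x hx
        have hF' : HasDerivAt (fun y => d2 y - d1 y)
            (-α * (d2 x - d1 x) + β * (a2 x - a1 x) ^ 2) x := by
          have := (h4 x hx.1).sub (h3 x hx.1)
          convert this using 1 <;> try rfl
          linear_combination (-(d2 x - d1 x)) * hαdef + (a2 x - a1 x) ^ 2 * hβdef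
        have hlin : HasDerivAt (fun y : ℝ => 2 * β * c * K * y) (2 * β * c * K) x := by
          simpa using (hasDerivAt_id x).const_mul (2 * β * c * K)
        have hg := (((he x).const_mul (β * c ^ 2 / α)).add hlin).sub
          ((he' x).const_mul (β * K ^ 2 / α))
        exact ((((he x).mul hF').sub hg).continuousAt).continuousWithinAt
      · intro x hx
        have hF' : HasDerivAt (fun y => d2 y - d1 y)
            (-α * (d2 x - d1 x) + β * (a2 x - a1 x) ^ 2) x := by
          have := (h4 x hx.1).sub (h3 x hx.1)
          convert this using 1 <;> try rfl
          linear_combination (-(d2 x - d1 x)) * hαdef + (a2 x - a1 x) ^ 2 * hβdef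
        have hlin : HasDerivAt (fun y : ℝ => 2 * β * c * K * y) (2 * β * c * K) x := by
          simpa using (hasDerivAt_id x).const_mul (2 * β * c * K)
        have hg := (((he x).const_mul (β * c ^ 2 / α)).add hlin).sub
          ((he' x).const_mul (β * K ^ 2 / α))
        have hd : HasDerivAt (fun y => Real.exp (α * y) * (d2 y - d1 y)
            - (β * c ^ 2 / α * Real.exp (α * y) + 2 * β * c * K * y
                - β * K ^ 2 / α * Real.exp (-(α * y)))) 0 x := by
          have := ((he x).mul hF').sub hg
          convert this using 1 <;> try rfl
          have hbx := hbval x hx.1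
          linear_combination
            (- Real.exp (α * x) * β * (a2 x - a1 x + c + K * Real.exp (-(α * x)))) * hbx
            + Real.exp (α * x) * hp + Real.exp (-(α * x)) * hq
            + (-(2 * β * c * K) - β * K ^ 2 * Real.exp (-(α * x))) * hEE x
        exact hd.hasDerivWithinAt
    have h1t := key t ⟨ht, le_refl t⟩
    simp only [mul_zero, Real.exp_zero, one_mul, mul_one, neg_zero] at h1t
    linear_combination Real.exp (-(α * t)) * h1t
      + (β * c ^ 2 / α - (d2 t - d1 t)) * hEE t
      - Real.exp (-(α * t)) * hC0def
  -- Step 3: take the limit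
  have hcomp : Filter.Tendsto (fun t : ℝ => α * t) atTop atTop :=
    Filter.Tendsto.const_mul_atTop hαpos tendsto_id
  have htexp : Filter.Tendsto (fun t : ℝ => t * Real.exp (-(α * t))) atTop (nhds 0) := by
    have h1 : Filter.Tendsto (fun x : ℝ => x * Real.exp (-x)) atTop (nhds 0) := by
      simpa using Real.tendsto_pow_mul_exp_neg_atTop_nhds_zero 1
    have h2 := (h1.comp hcomp).const_mul (1 / α)
    rw [mul_zero] at h2
    refine Filter.Tendsto.congr (fun t => ?_) h2
    simp only [Function.comp]
    field_simp
  have hexp0 : Filter.Tendsto (fun t : ℝ => Real.exp (-(α * t))) atTop (nhds 0) :=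
    Real.tendsto_exp_neg_atTop_nhds_zero.comp hcomp
  have hlim : Filter.Tendsto
      (fun t : ℝ => β * c ^ 2 / α + 2 * β * c * K * (t * Real.exp (-(α * t)))
        - β * K ^ 2 / α * (Real.exp (-(α * t))) ^ 2 + C0 * Real.exp (-(α * t)))
      atTop (nhds (β * c ^ 2 / α)) := by
    have := (((tendsto_const_nhds : Filter.Tendsto (fun _ : ℝ => β * c ^ 2 / α) atTop (nhds (β * c ^ 2 / α))).add (htexp.const_mul (2 * β * c * K))).sub
      ((hexp0.pow 2).const_mul (β * K ^ 2 / α))).add (hexp0.const_mul C0)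
    norm_num at this
    refine this.congr fun t => ?_
    ring
  have hfinal : β * c ^ 2 / α = c ^ 2 * (β / α) := by ring
  rw [← hfinal]
  refine hlim.congr' ?_
  filter_upwards [eventually_ge_atTop (0:ℝ)] with t ht
  exact (hFval t ht).symm
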